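/- For ridge regression with λ > 0, if w* = (X Xᵀ + λ I)⁻¹ X y is nonzero, then the hyperparameter-stealing estimate λ̂ = -(w*ᵀ w*)⁻¹ w*ᵀ (X(Xᵀ w* - y)) equals λ. -/

import Mathlib

open Matrix

lemma aux_posdef (m n : ℕ) (X : Matrix (Fin m) (Fin n) ℝ) (lam : ℝ) (hlam : 0 < lam) :
    (X * X.transpose + lam • (1 : Matrix (Fin m) (Fin m) ℝ)).PosDef := by
  have hsd : (X * X.transpose).PosSemidef := by
    simpa [Matrix.conjTranspose_eq_transpose_of_trivial] using
      Matrix.posSemidef_self_mul_conjTranspose X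
  rw [Matrix.posDef_iff_dotProduct_mulVec]
  constructor
  · exact hsd.isHermitian.add (by simp [Matrix.IsHermitian])
  · intro x hx
    have h1 : (0:ℝ) ≤ x ⬝ᵥ (X * X.transpose) *ᵥ x := by simpa using (Matrix.posSemidef_iff_dotProduct_mulVec.mp hsd).2 x
    have h2 : (0:ℝ) < lam * (x ⬝ᵥ x) := by
      have : (0:ℝ) < x ⬝ᵥ x := by
        have := Matrix.dotProduct_star_self_pos_iff (v := x) |>.mpr hx
        simpa using this
      positivity
    simp only [Matrix.add_mulVec, dotProduct_add, Matrix.smul_mulVec,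
      Matrix.one_mulVec, dotProduct_smul, star_trivial, smul_eq_mul]
    linarith

/-- For ridge regression with `λ > 0`, if `w* = (X Xᵀ + λ I)⁻¹ X y` is
nonzero, the hyperparameter-stealing estimate
`λ̂ = -(w*ᵀ w*)⁻¹ w*ᵀ (X(Xᵀ w* - y))` equals `λ`. -/
theorem stmt_3 (m n : ℕ) (X : Matrix (Fin m) (Fin n) ℝ) (y : Fin n → ℝ)
    (lam : ℝ) (hlam : 0 < lam) (w : Fin m → ℝ)
    (hw : w = (X * X.transpose + lam • (1 : Matrix (Fin m) (Fin m) ℝ))⁻¹.mulVec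
      (X.mulVec y))
    (hw0 : w ≠ 0) :
    -(dotProduct w w)⁻¹ *
      dotProduct w (X.mulVec (X.transpose.mulVec w - y)) = lam := by
  set A := X * X.transpose + lam • (1 : Matrix (Fin m) (Fin m) ℝ) with hA
  have hpd := aux_posdef m n X lam hlam
  have hAeq : A.mulVec w = X.mulVec y := by
    rw [hw, Matrix.mulVec_mulVec, Matrix.mul_nonsing_inv _ (isUnit_iff_isUnit_det _ |>.1 hpd.isUnit), Matrix.one_mulVec]
  have key : X.mulVec (X.transpose.mulVec w - y) = -(lam • w) := by
    have : (X * X.transpose).mulVec w + lam • w = X.mulVec y := by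
      simpa [hA, Matrix.add_mulVec, Matrix.smul_mulVec, Matrix.one_mulVec] using hAeq
    rw [Matrix.mulVec_sub, Matrix.mulVec_mulVec]
    linear_combination (norm := module) this
  have hww : dotProduct w w ≠ 0 := by
    have := Matrix.dotProduct_star_self_pos_iff (v := w) |>.mpr hw0
    simpa using this.ne'
  rw [key]
  rw [dotProduct_neg, dotProduct_smul, smul_eq_mul]
  field_simp
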